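/- Let K ⊆ ℝ^d be a convex body that is λ-strongly convex with respect to the Euclidean unit ball, and let g_1, …, g_T ∈ ℝ^d be gain vectors with ‖g_t‖₂ ≤ M for all t, whose partial sums s_t := g_1 + ⋯ + g_t satisfy the growth condition ‖s_t‖₂ ≥ tG for some G > 0 and all t ∈ {1,…,T}. Let x_1 be a maximizer of ⟨s_1, x⟩ over x ∈ K, and for each t ∈ {2,…,T} let x_t be a maximizer of ⟨s_{t−1}, x⟩ over x ∈ K. Then the regret satisfies max_{x∈K} Σ_{t=1}^T ⟨g_t, x⟩ − Σ_{t=1}^T ⟨g_t, x_t⟩ ≤ (M²/(2λG))·(1 + log T). -/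

import Mathlib

open Pointwise RealInnerProductSpace

lemma sum_inv_eq_harmonic (n : ℕ) :
    ∑ t ∈ Finset.Icc 2 (n+1), ((t:ℝ)-1)⁻¹ = (harmonic n : ℝ) := by
  induction n with
  | zero => simp
  | succ n ih =>
    rw [Finset.sum_Icc_succ_top (by omega : 2 ≤ n + 1 + 1), ih, harmonic_succ]
    push_cast
    ring

lemma key_geom {d : ℕ} (K : Set (EuclideanSpace ℝ (Fin d)))
    (lam : ℝ)
    (hSC : ∀ x ∈ K, ∀ y ∈ K,
      ({midpoint ℝ x y} : Set (EuclideanSpace ℝ (Fin d)))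
        + (lam * ‖x - y‖ ^ 2) • Metric.closedBall (0 : EuclideanSpace ℝ (Fin d)) 1 ⊆ K)
    (w : EuclideanSpace ℝ (Fin d)) (hw : w ≠ 0)
    (u : EuclideanSpace ℝ (Fin d)) (hu : u ∈ K)
    (hmax : ∀ z ∈ K, ⟪w, z⟫ ≤ ⟪w, u⟫)
    (v : EuclideanSpace ℝ (Fin d)) (hv : v ∈ K) :
    2 * lam * ‖w‖ * ‖u - v‖ ^ 2 ≤ ⟪w, u⟫ - ⟪w, v⟫ := by
  have hwpos : 0 < ‖w‖ := norm_pos_iff.mpr hw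
  set p : EuclideanSpace ℝ (Fin d) :=
    midpoint ℝ u v + (lam * ‖u - v‖ ^ 2) • (‖w‖⁻¹ • w) with hp
  have hpK : p ∈ K := by
    apply hSC u hu v hv
    refine Set.add_mem_add (Set.mem_singleton _) ?_
    refine Set.smul_mem_smul_set ?_
    simp [norm_smul, abs_of_pos (inv_pos.mpr hwpos), inv_mul_cancel₀ hwpos.ne']
  have h1 : ⟪w, p⟫ ≤ ⟪w, u⟫ := hmax p hpK
  have h2 : ⟪w, p⟫ = (⟪w, u⟫ + ⟪w, v⟫) / 2 + lam * ‖u - v‖ ^ 2 * ‖w‖ := by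
    rw [hp, inner_add_right, inner_smul_right, inner_smul_right,
      real_inner_self_eq_norm_sq, midpoint_eq_smul_add, inner_smul_right, inner_add_right]
    field_simp
    simp only [invOf_eq_inv]
    ring
  rw [h2] at h1
  linarith

set_option maxHeartbeats 1000000 in
theorem ftl_regret_growth_condition
    {d : ℕ} (K : Set (EuclideanSpace ℝ (Fin d)))
    (hKcomp : IsCompact K) (hKconv : Convex ℝ K) (hKint : (interior K).Nonempty)
    (lam : ℝ) (hlam : 0 < lam)
    (hSC : ∀ x ∈ K, ∀ y ∈ K,
      ({midpoint ℝ x y} : Set (EuclideanSpace ℝ (Fin d)))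
        + (lam * ‖x - y‖ ^ 2) • Metric.closedBall (0 : EuclideanSpace ℝ (Fin d)) 1 ⊆ K)
    (T : ℕ) (hT : 1 ≤ T)
    (M G : ℝ) (hG : 0 < G)
    (g : ℕ → EuclideanSpace ℝ (Fin d))
    (hM : ∀ t ∈ Finset.Icc 1 T, ‖g t‖ ≤ M)
    (s : ℕ → EuclideanSpace ℝ (Fin d))
    (hsdef : ∀ t, s t = ∑ i ∈ Finset.Icc 1 t, g i)
    (hgrowth : ∀ t ∈ Finset.Icc 1 T, (t : ℝ) * G ≤ ‖s t‖)
    (x : ℕ → EuclideanSpace ℝ (Fin d))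
    (hx1K : x 1 ∈ K) (hx1 : ∀ z ∈ K, ⟪s 1, z⟫ ≤ ⟪s 1, x 1⟫)
    (hxtK : ∀ t, 2 ≤ t → t ≤ T → x t ∈ K)
    (hxt : ∀ t, 2 ≤ t → t ≤ T → ∀ z ∈ K, ⟪s (t - 1), z⟫ ≤ ⟪s (t - 1), x t⟫) :
    ∀ z ∈ K,
      ∑ t ∈ Finset.Icc 1 T, ⟪g t, z⟫ - ∑ t ∈ Finset.Icc 1 T, ⟪g t, x t⟫
        ≤ M ^ 2 / (2 * lam * G) * (1 + Real.log T) := by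
  intro z hz
  have hM0 : 0 ≤ M := le_trans (norm_nonneg _) (hM 1 (Finset.mem_Icc.mpr ⟨le_refl 1, hT⟩))
  -- existence of a maximizer of ⟪s T, ·⟫
  obtain ⟨yT, hyTK, hyTmax⟩ := hKcomp.exists_isMaxOn ⟨x 1, hx1K⟩
    ((continuous_const.inner continuous_id).continuousOn :
      ContinuousOn (fun v : EuclideanSpace ℝ (Fin d) => ⟪s T, v⟫) K)
  have hyTmax' : ∀ z ∈ K, ⟪s T, z⟫ ≤ ⟪s T, yT⟫ := fun z hz => hyTmax hz
  set y : ℕ → EuclideanSpace ℝ (Fin d) := fun t => if t = T then yT else x (t+1) with hy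
  have hyK : ∀ t, 1 ≤ t → t ≤ T → y t ∈ K := by
    intro t h1 h2
    by_cases h : t = T
    · simp [hy, h, hyTK]
    · simp only [hy, if_neg h]
      exact hxtK (t+1) (by omega) (by omega)
  have hymax : ∀ t, 1 ≤ t → t ≤ T → ∀ z ∈ K, ⟪s t, z⟫ ≤ ⟪s t, y t⟫ := by
    intro t h1 h2 z hz
    by_cases h : t = T
    · simp only [hy, if_pos h, h]; exact hyTmax' z hz
    · simp only [hy, if_neg h]
      have := hxt (t+1) (by omega) (by omega) z hz
      simpa using this
  have hstep : ∀ t, 1 ≤ t → s t = g t + s (t - 1) := by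
    intro t h1
    rw [hsdef, hsdef]
    have hins : Finset.Icc 1 t = insert t (Finset.Icc 1 (t-1)) := by
      ext a; simp only [Finset.mem_Icc, Finset.mem_insert]; omega
    rw [hins, Finset.sum_insert (by simp only [Finset.mem_Icc]; omega)]
  have hs0 : s 0 = 0 := by
    rw [hsdef]; simp
  -- Be-the-leader lemma
  have hBTL : ∀ n, n ≤ T → ∀ z ∈ K, ⟪s n, z⟫ ≤ ∑ t ∈ Finset.Icc 1 n, ⟪g t, y t⟫ := by
    intro n
    induction n with
    | zero => intro _ z hz; simp [hs0]
    | succ n ih =>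
      intro hn z hz
      calc ⟪s (n+1), z⟫ ≤ ⟪s (n+1), y (n+1)⟫ := hymax (n+1) (by omega) hn z hz
        _ = ⟪g (n+1), y (n+1)⟫ + ⟪s n, y (n+1)⟫ := by
            rw [hstep (n+1) (by omega)]
            simp [inner_add_left]
        _ ≤ ⟪g (n+1), y (n+1)⟫ + ∑ t ∈ Finset.Icc 1 n, ⟪g t, y t⟫ := by
            have := ih (by omega) (y (n+1)) (hyK (n+1) (by omega) hn)
            linarith
        _ = ∑ t ∈ Finset.Icc 1 (n+1), ⟪g t, y t⟫ := by
            rw [Finset.sum_Icc_succ_top (by omega : 1 ≤ n + 1)]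
            ring
  -- regret bounded by sum of per-round differences
  have hreg : ∑ t ∈ Finset.Icc 1 T, ⟪g t, z⟫ - ∑ t ∈ Finset.Icc 1 T, ⟪g t, x t⟫
      ≤ ∑ t ∈ Finset.Icc 1 T, (⟪g t, y t⟫ - ⟪g t, x t⟫) := by
    have h1 : ∑ t ∈ Finset.Icc 1 T, ⟪g t, z⟫ = ⟪s T, z⟫ := by
      rw [hsdef T, sum_inner]
    rw [h1, Finset.sum_sub_distrib]
    have := hBTL T le_rfl z hz
    linarith
  -- per-term bound for t ≥ 2
  set C : ℝ := M ^ 2 / (2 * lam * G) with hC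
  have hC0 : 0 ≤ C := by positivity
  have hterm : ∀ t ∈ Finset.Icc 2 T, ⟪g t, y t⟫ - ⟪g t, x t⟫ ≤ C * ((t:ℝ)-1)⁻¹ := by
    intro t ht
    rw [Finset.mem_Icc] at ht
    obtain ⟨ht2, htT⟩ := ht
    have hgrow := hgrowth (t-1) (Finset.mem_Icc.mpr ⟨by omega, by omega⟩)
    have hcast : ((t - 1 : ℕ) : ℝ) = (t:ℝ) - 1 := by
      push_cast [Nat.cast_sub (by omega : 1 ≤ t)]; ring
    rw [hcast] at hgrow
    have ht1 : (1:ℝ) ≤ (t:ℝ) - 1 := by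
      have : (2:ℝ) ≤ (t:ℝ) := by exact_mod_cast ht2
      linarith
    have hwpos : 0 < ‖s (t-1)‖ := lt_of_lt_of_le (by nlinarith) hgrow
    have hw0 : s (t-1) ≠ 0 := norm_pos_iff.mp hwpos
    have hxK := hxtK t ht2 htT
    have hyKt := hyK t (by omega) htT
    have h1 := key_geom K lam hSC (s (t-1)) hw0 (x t) hxK (hxt t ht2 htT) (y t) hyKt
    have h2 : ⟪s t, x t⟫ ≤ ⟪s t, y t⟫ := hymax t (by omega) htT (x t) hxK
    have hgt : g t = s t - s (t-1) := by rw [hstep t (by omega)]; abel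
    set D : ℝ := ‖x t - y t‖ with hD
    have hD0 : 0 ≤ D := norm_nonneg _
    have h3 : ⟪g t, y t⟫ - ⟪g t, x t⟫
        = (⟪s t, y t⟫ - ⟪s t, x t⟫) + (⟪s (t-1), x t⟫ - ⟪s (t-1), y t⟫) := by
      rw [hgt]; simp [inner_sub_left]; ring
    have hE1 : 2 * lam * ‖s (t-1)‖ * D ^ 2 ≤ ⟪g t, y t⟫ - ⟪g t, x t⟫ := by
      rw [h3]; linarith
    have h4 : ⟪g t, y t⟫ - ⟪g t, x t⟫ ≤ M * D := by
      have : ⟪g t, y t⟫ - ⟪g t, x t⟫ = ⟪g t, y t - x t⟫ := by rw [inner_sub_right]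
      rw [this]
      calc ⟪g t, y t - x t⟫ ≤ ‖g t‖ * ‖y t - x t‖ := real_inner_le_norm _ _
        _ = ‖g t‖ * D := by rw [norm_sub_rev]
        _ ≤ M * D := mul_le_mul_of_nonneg_right (hM t (Finset.mem_Icc.mpr ⟨by omega, htT⟩)) hD0
    -- combine: E ≤ M^2 / (2 lam ‖w‖)
    have hstepA : ⟪g t, y t⟫ - ⟪g t, x t⟫ ≤ M ^ 2 / (2 * lam * ‖s (t-1)‖) := by
      rw [le_div_iff₀ (by positivity)]
      nlinarith [sq_nonneg (M - 2 * lam * ‖s (t-1)‖ * D), hE1, h4, hD0, hM0,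
        mul_pos (mul_pos two_pos hlam) hwpos]
    have hle2 : 2 * lam * (G * ((t:ℝ)-1)) ≤ 2 * lam * ‖s (t-1)‖ := by nlinarith
    have hstepB : M ^ 2 / (2 * lam * ‖s (t-1)‖) ≤ M ^ 2 / (2 * lam * (G * ((t:ℝ)-1))) :=
      div_le_div_of_nonneg_left (sq_nonneg M) (by positivity) hle2
    have heq : C * ((t:ℝ)-1)⁻¹ = M ^ 2 / (2 * lam * (G * ((t:ℝ)-1))) := by
      rw [hC, ← div_eq_mul_inv, div_div, mul_assoc]
    rw [heq]
    exact hstepA.trans hstepB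
  -- split off t = 1
  obtain ⟨n, rfl⟩ : ∃ n, T = n + 1 := ⟨T - 1, by omega⟩
  have hsplit : Finset.Icc 1 (n+1) = insert 1 (Finset.Icc 2 (n+1)) := by
    ext a; simp only [Finset.mem_Icc, Finset.mem_insert]; omega
  have h1le : ⟪g 1, y 1⟫ - ⟪g 1, x 1⟫ ≤ 0 := by
    have hg1 : g 1 = s 1 := by rw [hstep 1 le_rfl]; simp [hs0]
    have := hx1 (y 1) (hyK 1 le_rfl (by omega))
    rw [hg1]; linarith
  have hsum2 : ∑ t ∈ Finset.Icc 2 (n+1), (⟪g t, y t⟫ - ⟪g t, x t⟫)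
      ≤ C * (harmonic n : ℝ) := by
    calc ∑ t ∈ Finset.Icc 2 (n+1), (⟪g t, y t⟫ - ⟪g t, x t⟫)
        ≤ ∑ t ∈ Finset.Icc 2 (n+1), C * ((t:ℝ)-1)⁻¹ := Finset.sum_le_sum hterm
      _ = C * ∑ t ∈ Finset.Icc 2 (n+1), ((t:ℝ)-1)⁻¹ := by rw [Finset.mul_sum]
      _ = C * (harmonic n : ℝ) := by rw [sum_inv_eq_harmonic]
  have hharm : (harmonic n : ℝ) ≤ 1 + Real.log (n+1) := by
    refine le_trans (harmonic_le_one_add_log n) ?_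
    have hlog : Real.log n ≤ Real.log (n+1) := by
      rcases Nat.eq_zero_or_pos n with h | h
      · simp [h]
      · exact Real.log_le_log (by exact_mod_cast h) (by push_cast; linarith)
    linarith
  calc ∑ t ∈ Finset.Icc 1 (n+1), ⟪g t, z⟫ - ∑ t ∈ Finset.Icc 1 (n+1), ⟪g t, x t⟫
      ≤ ∑ t ∈ Finset.Icc 1 (n+1), (⟪g t, y t⟫ - ⟪g t, x t⟫) := hreg
    _ = (⟪g 1, y 1⟫ - ⟪g 1, x 1⟫) + ∑ t ∈ Finset.Icc 2 (n+1), (⟪g t, y t⟫ - ⟪g t, x t⟫) := by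
        rw [hsplit, Finset.sum_insert (by simp)]
    _ ≤ C * (harmonic n : ℝ) := by linarith
    _ ≤ C * (1 + Real.log ((n+1 : ℕ) : ℝ)) := by
        apply mul_le_mul_of_nonneg_left _ hC0
        push_cast
        exact hharm
    _ = M ^ 2 / (2 * lam * G) * (1 + Real.log ((n+1 : ℕ) : ℝ)) := by rw [hC]
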